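/- Let k and n be nonnegative integers with n ≡ k (mod 2) and n ≥ k+4. Then the spectral radius of the sequential join K_{n−k−3} ∨ K_{k+1} ∨ (2K_1) equals θ(n,k), the largest real root of x³ − (n−4)x² − (n+2k−1)x + 2(k+1)(n−k−4) = 0. -/

import Mathlib

open SimpleGraph

noncomputable local instance (priority := 10) decAdjAll {V : Type*} (G : SimpleGraph V) :
    DecidableRel G.Adj := Classical.decRel _

/-- `ρ` is the spectral radius of `G`: the largest real eigenvalue of its adjacency matrix. -/
def IsSpectralRadius {V : Type*} [Fintype V] [DecidableEq V] (G : SimpleGraph V)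
    [DecidableRel G.Adj] (ρ : ℝ) : Prop :=
  IsGreatest {μ : ℝ | Module.End.HasEigenvalue (Matrix.toLin' (G.adjMatrix ℝ)) μ} ρ

/-- The sequential join `G1 ∨ G2 ∨ G3`: edges within each `Gi`, all edges between `G1` and
`G2`, all edges between `G2` and `G3`, and no edges between `G1` and `G3`. -/
def seqJoin3 {A B C : Type*} (G1 : SimpleGraph A) (G2 : SimpleGraph B) (G3 : SimpleGraph C) :
    SimpleGraph (A ⊕ B ⊕ C) :=
  SimpleGraph.fromRel fun x y =>
    match x, y with
    | Sum.inl a, Sum.inl a' => G1.Adj a a'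
    | Sum.inl _, Sum.inr (Sum.inl _) => True
    | Sum.inr (Sum.inl b), Sum.inr (Sum.inl b') => G2.Adj b b'
    | Sum.inr (Sum.inl _), Sum.inr (Sum.inr _) => True
    | Sum.inr (Sum.inr c), Sum.inr (Sum.inr c') => G3.Adj c c'
    | _, _ => False


section
variable (a b : ℕ)

local notation "GG" => seqJoin3 (⊤ : SimpleGraph (Fin a)) (⊤ : SimpleGraph (Fin b)) (⊥ : SimpleGraph (Fin 2))

lemma mulVec_elim (ha : 1 ≤ a) (hb : 1 ≤ b) (p q r : ℝ) :
    ((GG).adjMatrix ℝ).mulVec (Sum.elim (fun _ => p) (Sum.elim (fun _ => q) (fun _ => r)))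
      = Sum.elim (fun _ => ((a:ℝ)-1)*p + b*q)
          (Sum.elim (fun _ => (a:ℝ)*p + ((b:ℝ)-1)*q + 2*r) (fun _ => (b:ℝ)*q)) := by
  have key : ∀ (m : ℕ) (i : Fin m) (c : ℝ),
      (∑ j : Fin m, (if i = j then (0:ℝ) else 1) * c) = ((m:ℝ)-1)*c := by
    intro m i c
    have h1 : ∀ j : Fin m, (if i = j then (0:ℝ) else 1) * c = c - (if i = j then c else 0) := by
      intro j; split <;> ring
    simp only [h1, Finset.sum_sub_distrib, Finset.sum_const, Finset.card_univ, Fintype.card_fin,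
      Finset.sum_ite_eq, Finset.mem_univ, if_pos]
    ring
  funext i
  rcases i with i | i | i <;>
    simp only [Matrix.mulVec, dotProduct, Fintype.sum_sum_type, Sum.elim_inl, Sum.elim_inr,
      SimpleGraph.adjMatrix_apply] <;>
    simp only [seqJoin3, SimpleGraph.fromRel_adj, top_adj, SimpleGraph.bot_adj, ne_eq,
      Sum.inl.injEq, Sum.inr.injEq, Sum.inl_ne_inr, Sum.inr_ne_inl, not_false_iff, true_or,
      or_self, and_true, and_false, false_and, true_and, not_true, not_false_eq_true,
      iff_true, iff_false, if_true, if_false]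
  all_goals
    have key2 : ∀ (m : ℕ) (u : Fin m) (c : ℝ),
        (∑ x : Fin m, (if ¬u = x ∧ (¬u = x ∨ ¬x = u) then (1:ℝ) else 0) * c) = ((m:ℝ)-1)*c := by
      intro m u c
      have h2 : ∀ x : Fin m, (if ¬u = x ∧ (¬u = x ∨ ¬x = u) then (1:ℝ) else 0)
          = (if u = x then 0 else 1) := by
        intro x; by_cases h : u = x <;> simp [h]
      simp only [h2]; exact key m u c
    simp only [false_or, if_true, key2,
      Finset.sum_const, Finset.card_univ, Fintype.card_fin, nsmul_eq_mul, zero_mul, mul_zero,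
      Finset.sum_const_zero, one_mul]
    push_cast
    ring

lemma entries_nonneg (i j : Fin a ⊕ Fin b ⊕ Fin 2) : 0 ≤ (GG).adjMatrix ℝ i j := by
  rw [SimpleGraph.adjMatrix_apply]; split <;> norm_num

lemma key_spec (ha : 1 ≤ a) (hb : 1 ≤ b) (θ : ℝ)
    (hθ : IsGreatest {x : ℝ | (x - ((a:ℝ)-1)) * (x^2 - ((b:ℝ)-1)*x - 2*b) - (a:ℝ)*b*x = 0} θ) :
    IsGreatest {μ : ℝ | Module.End.HasEigenvalue (Matrix.toLin' ((GG).adjMatrix ℝ)) μ} θ := by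
  set A : ℝ := (a : ℝ) with hA
  set B : ℝ := (b : ℝ) with hB
  have hA1 : (1:ℝ) ≤ A := by rw [hA]; exact_mod_cast ha
  have hB1 : (1:ℝ) ≤ B := by rw [hB]; exact_mod_cast hb
  set g : ℝ → ℝ := fun x => (x - (A-1)) * (x^2 - (B-1)*x - 2*B) - A*B*x with hg
  -- θ > A
  have hgA : g A < 0 := by
    have : g A = -(B-1)*A*(A+1) - 2*B := by simp only [hg]; ring
    rw [this]
    have h0 : 0 ≤ (B-1)*A*(A+1) := by
      apply mul_nonneg (mul_nonneg (by linarith) (by linarith)); linarith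
    linarith
  have hθA : A < θ := by
    set M : ℝ := 2*A + 4*B with hM
    have hAM : A < M := by nlinarith
    have hgM : 0 < g M := by
      have h1 : (1:ℝ) ≤ M := by nlinarith
      have : g M = M^2 * (M - (A + B - 2) - (A + 3*B - 1)) + (A + 3*B - 1) * (M^2 - M)
          + 2*B*(A-1) := by simp only [hg]; ring
      rw [this]
      have h2 : M - (A + B - 2) - (A + 3*B - 1) = 3 := by ring
      nlinarith
    have hc : ContinuousOn g (Set.Icc A M) := by fun_prop
    have := intermediate_value_Ioo hAM.le hc (Set.mem_Ioo.2 ⟨hgA, hgM⟩)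
    obtain ⟨c, hc1, hc2⟩ := this
    exact lt_of_lt_of_le hc1.1 (hθ.2 hc2)
  have hθ0 : 0 < θ := lt_of_lt_of_le (by linarith) hθA.le
  have hs : 0 < θ - A + 1 := by linarith
  -- eigenvector
  set p : ℝ := B * θ with hp
  set q : ℝ := θ * (θ - A + 1) with hq
  set r : ℝ := B * (θ - A + 1) with hr
  have hp0 : 0 < p := by positivity
  have hq0 : 0 < q := by positivity
  have hr0 : 0 < r := by positivity
  set v : Fin a ⊕ Fin b ⊕ Fin 2 → ℝ :=
    Sum.elim (fun _ => p) (Sum.elim (fun _ => q) (fun _ => r)) with hv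
  have hgθ : g θ = 0 := hθ.1
  have heig : ((GG).adjMatrix ℝ).mulVec v = θ • v := by
    rw [hv, mulVec_elim a b ha hb]
    funext i
    rcases i with i | i | i <;> simp only [Sum.elim_inl, Sum.elim_inr, Pi.smul_apply, smul_eq_mul]
    · rw [hp, hq]; ring
    · rw [hp, hq, hr]; simp only [hg] at hgθ; linear_combination -hgθ
    · rw [hq, hr]; ring
  have hvpos : ∀ i, 0 < v i := by
    intro i
    rcases i with i | i | i
    · simpa [hv] using hp0
    · simpa [hv] using hq0
    · simpa [hv] using hr0
  constructor
  · -- θ is an eigenvalue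
    refine Module.End.hasEigenvalue_of_hasEigenvector (x := v) ⟨Module.End.mem_eigenspace_iff.2 ?_, ?_⟩
    · rw [Matrix.toLin'_apply]; exact heig
    · intro h0
      have := congrFun h0 (Sum.inr (Sum.inr 0))
      simp [hv] at this
      exact hr0.ne' this
  · -- upper bound
    rintro μ hμ
    obtain ⟨x, hx⟩ := hμ.exists_hasEigenvector
    have hxe : ((GG).adjMatrix ℝ).mulVec x = μ • x := by
      rw [← Matrix.toLin'_apply]; exact hx.apply_eq_smul
    obtain ⟨i, -, hi⟩ := Finset.exists_max_image Finset.univ (fun j => |x j| / v j)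
      ⟨Sum.inr (Sum.inr 0), Finset.mem_univ _⟩
    set c : ℝ := |x i| / v i with hc
    have hcb : ∀ j, |x j| ≤ c * v j := by
      intro j
      have h1 : |x j| / v j ≤ c := hi j (Finset.mem_univ j)
      calc |x j| = (|x j| / v j) * v j := by rw [div_mul_cancel₀ _ (hvpos j).ne']
        _ ≤ c * v j := mul_le_mul_of_nonneg_right h1 (hvpos j).le
    have hc0 : 0 < c := by
      obtain ⟨j, hj⟩ := Function.ne_iff.1 hx.2
      have hj' : (0:ℝ) < |x j| / v j := div_pos (abs_pos.2 (by simpa using hj)) (hvpos j)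
      exact lt_of_lt_of_le hj' (hi j (Finset.mem_univ j))
    have hxi : |x i| = c * v i := by rw [hc, div_mul_cancel₀ _ (hvpos i).ne']
    -- main inequality at index i
    have hmain : |μ| * |x i| ≤ c * (θ * v i) := by
      have h1 : |μ| * |x i| = |(((GG).adjMatrix ℝ).mulVec x) i| := by
        rw [hxe]; simp [abs_mul]
      rw [h1]
      have h2 : |(((GG).adjMatrix ℝ).mulVec x) i| ≤
          ∑ j, (GG).adjMatrix ℝ i j * |x j| := by
        have hrfl : (((GG).adjMatrix ℝ).mulVec x) i = ∑ j, (GG).adjMatrix ℝ i j * x j := rfl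
        rw [hrfl]
        refine le_trans (Finset.abs_sum_le_sum_abs _ _) ?_
        refine Finset.sum_le_sum fun j _ => ?_
        rw [abs_mul, abs_of_nonneg (entries_nonneg a b i j)]
      refine h2.trans ?_
      have h3 : ∑ j, (GG).adjMatrix ℝ i j * |x j| ≤
          ∑ j, (GG).adjMatrix ℝ i j * (c * v j) := by
        refine Finset.sum_le_sum fun j _ =>
          mul_le_mul_of_nonneg_left (hcb j) (entries_nonneg a b i j)
      refine h3.trans ?_
      have h4 : ∑ j, (GG).adjMatrix ℝ i j * (c * v j)
          = c * (((GG).adjMatrix ℝ).mulVec v) i := by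
        simp only [Matrix.mulVec, dotProduct, Finset.mul_sum]; congr 1; funext j; ring
      rw [h4, heig]
      simp only [Pi.smul_apply, smul_eq_mul]
      exact le_rfl
    rw [hxi] at hmain
    have : |μ| ≤ θ := by
      have hvi := hvpos i
      have := (mul_le_mul_iff_right₀ hc0).1 (by linarith [hmain] : c * (|μ| * v i) ≤ c * (θ * v i))
      exact (mul_le_mul_iff_left₀ hvi).1 this
    exact le_trans (le_abs_self μ) this

end

theorem spectralRadius_seqJoin_eq_theta (k n : ℕ)
    (hpar : n % 2 = k % 2) (hn : k + 4 ≤ n) (θ : ℝ)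
    (hθ : IsGreatest {x : ℝ | x ^ 3 - ((n : ℝ) - 4) * x ^ 2 - ((n : ℝ) + 2 * k - 1) * x
        + 2 * ((k : ℝ) + 1) * ((n : ℝ) - k - 4) = 0} θ) :
    IsSpectralRadius
      (seqJoin3 (⊤ : SimpleGraph (Fin (n - k - 3))) (⊤ : SimpleGraph (Fin (k + 1)))
        (⊥ : SimpleGraph (Fin 2))) θ := by
  have h3 : k + 3 ≤ n := by omega
  have hA : ((n - k - 3 : ℕ) : ℝ) = (n:ℝ) - (k:ℝ) - 3 := by
    rw [show n - k - 3 = n - (k+3) from by omega, Nat.cast_sub h3]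
    push_cast; ring
  have hset : {x : ℝ | x ^ 3 - ((n : ℝ) - 4) * x ^ 2 - ((n : ℝ) + 2 * k - 1) * x
        + 2 * ((k : ℝ) + 1) * ((n : ℝ) - k - 4) = 0}
      = {x : ℝ | (x - (((n-k-3:ℕ):ℝ)-1)) * (x^2 - (((k+1:ℕ):ℝ)-1)*x - 2*((k+1:ℕ):ℝ))
          - ((n-k-3:ℕ):ℝ)*((k+1:ℕ):ℝ)*x = 0} := by
    ext x
    simp only [Set.mem_setOf_eq, hA]
    push_cast
    constructor <;> intro h <;> linear_combination h
  exact key_spec (n-k-3) (k+1) (by omega) (by omega) θ (hset ▸ hθ)
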